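/- Suppose (R^{n_1}, B_{n_1}, J_{n_1}) and (R^{n_2}, B_{n_2}, J_{n_2}) are Hadamard triples. Then (R^{n_1+n_2}, B_{n_1+n_2}, J_{n_1} + (R^T)^{n_1} J_{n_2}) is a Hadamard triple, where B_{n_1+n_2} = B_{n_1} + R^{n_1} B_{n_2}. -/

import Mathlib

open scoped BigOperators ENNReal
open Matrix MeasureTheory

noncomputable section

/-- Cast of an integer matrix to a real matrix. -/
def mR {d : ℕ} (R : Matrix (Fin d) (Fin d) ℤ) : Matrix (Fin d) (Fin d) ℝ :=
  R.map (Int.cast : ℤ → ℝ)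

/-- Cast of an integer vector to a real vector. -/
def vR {d : ℕ} (b : Fin d → ℤ) : Fin d → ℝ := fun i => (b i : ℝ)

/-- The standard inner product on ℝ^d. -/
def ip {d : ℕ} (x y : Fin d → ℝ) : ℝ := ∑ i, x i * y i

/-- A matrix is expansive if all of its complex eigenvalues have modulus > 1. -/
def Expansive {d : ℕ} (R : Matrix (Fin d) (Fin d) ℤ) : Prop :=
  ∀ z ∈ spectrum ℂ (R.map (Int.cast : ℤ → ℂ)), 1 < ‖z‖

/-- The matrix H = (1/√N)[e^{2πi⟨S⁻¹ a, ℓ⟩}]_{ℓ ∈ L, a ∈ A}. -/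
def hMatrix {d : ℕ} (S : Matrix (Fin d) (Fin d) ℤ) (A L : Finset (Fin d → ℤ)) :
    Matrix L A ℂ := fun ℓ a =>
  ((1 / Real.sqrt (A.card) : ℝ) : ℂ) *
    Complex.exp (2 * (Real.pi : ℂ) * Complex.I *
      ((ip ((mR S)⁻¹.mulVec (vR (a : Fin d → ℤ))) (vR (ℓ : Fin d → ℤ)) : ℝ) : ℂ))

/-- (S, A, L) is a Hadamard triple: #A = #L and the matrix H is unitary (H* H = 1). -/
def IsHadamardTriple {d : ℕ} (S : Matrix (Fin d) (Fin d) ℤ) (A L : Finset (Fin d → ℤ)) : Prop :=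
  A.card = L.card ∧ (hMatrix S A L)ᴴ * hMatrix S A L = 1

/-- B is a simple digit set for R: distinct elements are incongruent mod R(ℤ^d). -/
def SimpleDigits {d : ℕ} (R : Matrix (Fin d) (Fin d) ℤ) (B : Finset (Fin d → ℤ)) : Prop :=
  ∀ b ∈ B, ∀ b' ∈ B, (∃ k : Fin d → ℤ, b - b' = R.mulVec k) → b = b'

/-- Bb is a complete set of representatives modulo R(ℤ^d). -/
def CompleteResidues {d : ℕ} (R : Matrix (Fin d) (Fin d) ℤ) (Bb : Finset (Fin d → ℤ)) : Prop :=
  SimpleDigits R Bb ∧ ∀ x : Fin d → ℤ, ∃ b ∈ Bb, ∃ k : Fin d → ℤ, x = b + R.mulVec k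

/-- B_k = B + RB + ⋯ + R^{k-1}B. -/
def Bk {d : ℕ} (R : Matrix (Fin d) (Fin d) ℤ) (B : Finset (Fin d → ℤ)) (k : ℕ) :
    Finset (Fin d → ℤ) :=
  (Fintype.piFinset (fun _ : Fin k => B)).image
    (fun b => ∑ j : Fin k, (R ^ (j : ℕ)).mulVec (b j))

/-- The element of B_n associated to a word b ∈ B^n. -/
def beta {d : ℕ} (R : Matrix (Fin d) (Fin d) ℤ) {n : ℕ} (b : Fin n → (Fin d → ℤ)) :
    Fin d → ℤ := ∑ j : Fin n, (R ^ (j : ℕ)).mulVec (b j)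

/-- τ_b(x) = R⁻¹(x + b). -/
def tau {d : ℕ} (R : Matrix (Fin d) (Fin d) ℤ) (b : Fin d → ℤ) (x : Fin d → ℝ) : Fin d → ℝ :=
  (mR R)⁻¹.mulVec (x + vR b)

/-- τ at level n: x ↦ R^{-n}(x + b); the composition τ_{b_1}∘⋯∘τ_{b_n} equals
`tauN R n (beta R b)` under the identification of words with digits in B_n. -/
def tauN {d : ℕ} (R : Matrix (Fin d) (Fin d) ℤ) (n : ℕ) (b : Fin d → ℤ) (x : Fin d → ℝ) :
    Fin d → ℝ := ((mR R) ^ n)⁻¹.mulVec (x + vR b)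

/-- T is the attractor T(R,B): the (unique) nonempty compact set with T = ⋃_b τ_b(T). -/
def IsAttractor {d : ℕ} (R : Matrix (Fin d) (Fin d) ℤ) (B : Finset (Fin d → ℤ))
    (T : Set (Fin d → ℝ)) : Prop :=
  T.Nonempty ∧ IsCompact T ∧ T = ⋃ b ∈ B, tau R b '' T

/-- μ is the equal-weight self-affine measure: μ = (1/N) Σ_b μ ∘ τ_b⁻¹. -/
def IsSelfAffine {d : ℕ} (R : Matrix (Fin d) (Fin d) ℤ) (B : Finset (Fin d → ℤ))
    (μ : Measure (Fin d → ℝ)) : Prop :=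
  μ = (B.card : ℝ≥0∞)⁻¹ • ∑ b ∈ B, μ.map (tau R b)

/-- The no-overlap condition. -/
def NoOverlap {d : ℕ} (R : Matrix (Fin d) (Fin d) ℤ) (B : Finset (Fin d → ℤ))
    (μ : Measure (Fin d → ℝ)) (T : Set (Fin d → ℝ)) : Prop :=
  ∀ b ∈ B, ∀ b' ∈ B, b ≠ b' → μ (tau R b '' T ∩ tau R b' '' T) = 0

/-- The Fourier transform μ̂(ξ) = ∫ e^{-2πi⟨ξ,x⟩} dμ(x). -/
def ft {d : ℕ} (μ : Measure (Fin d → ℝ)) (ξ : Fin d → ℝ) : ℂ :=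
  ∫ x, Complex.exp (-(2 * (Real.pi : ℂ) * Complex.I * ((ip ξ x : ℝ) : ℂ))) ∂μ

/-- M_B(ξ) = (1/N) Σ_{b∈B} e^{-2πi⟨b,ξ⟩}. -/
def maskB {d : ℕ} (B : Finset (Fin d → ℤ)) (ξ : Fin d → ℝ) : ℂ :=
  (B.card : ℂ)⁻¹ *
    ∑ b ∈ B, Complex.exp (-(2 * (Real.pi : ℂ) * Complex.I * ((ip (vR b) ξ : ℝ) : ℂ)))

/-- M_{B_n}(ξ) = (1/N^n) Σ_{b∈B_n} e^{-2πi⟨b,ξ⟩} (summed over words). -/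
def maskBn {d : ℕ} (R : Matrix (Fin d) (Fin d) ℤ) (B : Finset (Fin d → ℤ)) (n : ℕ)
    (ξ : Fin d → ℝ) : ℂ :=
  ((B.card : ℂ) ^ n)⁻¹ * ∑ b ∈ Fintype.piFinset (fun _ : Fin n => B),
    Complex.exp (-(2 * (Real.pi : ℂ) * Complex.I * ((ip (vR (beta R b)) ξ : ℝ) : ℂ)))

/-- u_B(x) = |(1/N) Σ_{b∈B} e^{2πi⟨b,x⟩}|². -/
def uB {d : ℕ} (B : Finset (Fin d → ℤ)) (x : Fin d → ℝ) : ℝ :=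
  ‖(B.card : ℂ)⁻¹ *
    ∑ b ∈ B, Complex.exp (2 * (Real.pi : ℂ) * Complex.I * ((ip (vR b) x : ℝ) : ℂ))‖ ^ 2

/-- Σ_{λ∈J} |N^{-n/2} Σ_{b∈B_n} w_b e^{-2πi⟨R^{-n}b,λ⟩}|². -/
def frameSum {d : ℕ} (R : Matrix (Fin d) (Fin d) ℤ) (B : Finset (Fin d → ℤ)) (n : ℕ)
    (J : Finset (Fin d → ℤ)) (w : (Fin d → ℤ) → ℂ) : ℝ :=
  ∑ lam ∈ J, ‖((1 / Real.sqrt ((B.card : ℝ) ^ n) : ℝ) : ℂ) *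
    ∑ b ∈ Bk R B n, w b * Complex.exp (-(2 * (Real.pi : ℂ) * Complex.I *
      ((ip (((mR R) ^ n)⁻¹.mulVec (vR b)) (vR lam) : ℝ) : ℂ)))‖ ^ 2

/-- The almost-Parseval-frame inequality at level n with constant ε and frequency set J. -/
def APF {d : ℕ} (R : Matrix (Fin d) (Fin d) ℤ) (B : Finset (Fin d → ℤ)) (n : ℕ)
    (J : Finset (Fin d → ℤ)) (ε : ℝ) : Prop :=
  ∀ w : (Fin d → ℤ) → ℂ,
    (1 - ε) * (∑ b ∈ Bk R B n, ‖w b‖ ^ 2) ≤ frameSum R B n J w ∧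
    frameSum R B n J w ≤ (1 + ε) * (∑ b ∈ Bk R B n, ‖w b‖ ^ 2)

namespace HTaux

open Complex

variable {d : ℕ}

/-- e(x) = exp(2πix). -/
noncomputable def E (x : ℝ) : ℂ :=
  Complex.exp (2 * (Real.pi : ℂ) * Complex.I * (x : ℂ))

lemma E_add (x y : ℝ) : E (x + y) = E x * E y := by
  unfold E
  rw [← Complex.exp_add]
  push_cast
  ring_nf

lemma E_zero : E 0 = 1 := by simp [E]

lemma E_int (m : ℤ) : E (m : ℝ) = 1 := by
  unfold E
  rw [show (2 * (Real.pi : ℂ) * Complex.I * ((m : ℝ) : ℂ)) = (m : ℤ) * (2 * Real.pi * Complex.I) by push_cast; ring]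
  exact Complex.exp_int_mul_two_pi_mul_I m

lemma conj_E (x : ℝ) : (starRingEnd ℂ) (E x) = E (-x) := by
  unfold E
  rw [← Complex.exp_conj]
  congr 1
  simp only [_root_.map_mul, Complex.conj_I, Complex.conj_ofReal, map_ofNat]
  push_cast
  ring

lemma E_ne_zero (x : ℝ) : E x ≠ 0 := Complex.exp_ne_zero _

lemma mR_pow (R : Matrix (Fin d) (Fin d) ℤ) (n : ℕ) : mR (R ^ n) = (mR R) ^ n := by
  simpa [mR, RingHom.mapMatrix_apply] using map_pow ((Int.castRingHom ℝ).mapMatrix) R n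

lemma mR_transpose (R : Matrix (Fin d) (Fin d) ℤ) : mR Rᵀ = (mR R)ᵀ := rfl

lemma vR_add (x y : Fin d → ℤ) : vR (x + y) = vR x + vR y := by
  funext i; simp [vR]

lemma vR_mulVec (R : Matrix (Fin d) (Fin d) ℤ) (x : Fin d → ℤ) :
    vR (R.mulVec x) = (mR R).mulVec (vR x) := by
  funext i
  simp [vR, mR, Matrix.mulVec, dotProduct]

lemma vR_inj : Function.Injective (vR (d := d)) := by
  intro x y h
  funext i
  have := congrFun h i
  simpa [vR] using this

lemma ip_eq_dot (x y : Fin d → ℝ) : ip x y = dotProduct x y := rfl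

lemma ip_int (c l : Fin d → ℤ) : ip (vR c) (vR l) = ((∑ i, c i * l i : ℤ) : ℝ) := by
  simp [ip, vR]

lemma E_ip_int (c l : Fin d → ℤ) : E (ip (vR c) (vR l)) = 1 := by
  rw [ip_int]; exact E_int _

end HTaux
namespace HTaux

variable {d : ℕ}

lemma det_mR_ne_zero {R : Matrix (Fin d) (Fin d) ℤ} (hR : Expansive R) :
    (mR R).det ≠ 0 := by
  have h0 : (0 : ℂ) ∉ spectrum ℂ (R.map (Int.cast : ℤ → ℂ)) := by
    intro h
    have := hR 0 h
    rw [norm_zero] at this; linarith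
  have hu : IsUnit (R.map (Int.cast : ℤ → ℂ)) := by
    rwa [spectrum.zero_mem_iff, not_not] at h0
  have hdet : IsUnit (R.map (Int.cast : ℤ → ℂ)).det :=
    (Matrix.isUnit_iff_isUnit_det _).mp hu
  have hmap : (R.map (Int.cast : ℤ → ℂ)).det = ((R.det : ℤ) : ℂ) :=
    (RingHom.map_det (Int.castRingHom ℂ) R).symm ▸ rfl
  have hZ : (R.det : ℂ) ≠ 0 := by
    rw [hmap] at hdet
    exact hdet.ne_zero
  have hz : R.det ≠ 0 := by exact_mod_cast hZ
  have : (mR R).det = ((R.det : ℤ) : ℝ) := by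
    simpa [mR] using (RingHom.map_det (Int.castRingHom ℝ) R).symm
  rw [this]
  exact_mod_cast hz

lemma det_mR_pow_ne_zero {R : Matrix (Fin d) (Fin d) ℤ} (hdet : (mR R).det ≠ 0) (m : ℕ) :
    ((mR R) ^ m).det ≠ 0 := by
  rw [Matrix.det_pow]
  exact pow_ne_zero _ hdet

lemma mulVec_inv_cancel {R : Matrix (Fin d) (Fin d) ℤ} (hdet : (mR R).det ≠ 0) (m : ℕ)
    (v : Fin d → ℝ) : ((mR R) ^ m).mulVec (((mR R) ^ m)⁻¹.mulVec v) = v := by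
  rw [Matrix.mulVec_mulVec, Matrix.mul_nonsing_inv _ (isUnit_iff_ne_zero.mpr
    (det_mR_pow_ne_zero hdet m)), Matrix.one_mulVec]

lemma inv_mulVec_cancel {R : Matrix (Fin d) (Fin d) ℤ} (hdet : (mR R).det ≠ 0) (m : ℕ)
    (v : Fin d → ℝ) : ((mR R) ^ m)⁻¹.mulVec (((mR R) ^ m).mulVec v) = v := by
  rw [Matrix.mulVec_mulVec, Matrix.nonsing_inv_mul _ (isUnit_iff_ne_zero.mpr
    (det_mR_pow_ne_zero hdet m)), Matrix.one_mulVec]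

lemma mulVec_int_inj {R : Matrix (Fin d) (Fin d) ℤ} (hdet : (mR R).det ≠ 0) (m : ℕ)
    {x y : Fin d → ℤ} (h : (R ^ m).mulVec x = (R ^ m).mulVec y) : x = y := by
  apply vR_inj
  have : vR ((R ^ m).mulVec x) = vR ((R ^ m).mulVec y) := by rw [h]
  rw [vR_mulVec, vR_mulVec, mR_pow] at this
  have h2 := congrArg (((mR R) ^ m)⁻¹.mulVec) this
  rwa [inv_mulVec_cancel hdet, inv_mulVec_cancel hdet] at h2

lemma ip_add_left (x y z : Fin d → ℝ) : ip (x + y) z = ip x z + ip y z := by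
  simp [ip, add_mul, Finset.sum_add_distrib]

lemma ip_add_right (x y z : Fin d → ℝ) : ip x (y + z) = ip x y + ip x z := by
  simp [ip, mul_add, Finset.sum_add_distrib]

lemma ip_sub_left (x y z : Fin d → ℝ) : ip (x - y) z = ip x z - ip y z := by
  simp [ip, sub_mul, Finset.sum_sub_distrib]

lemma ip_transpose (A : Matrix (Fin d) (Fin d) ℝ) (u w : Fin d → ℝ) :
    ip u (Aᵀ.mulVec w) = ip (A.mulVec u) w := by
  rw [ip_eq_dot, ip_eq_dot, dotProduct_mulVec, Matrix.vecMul_transpose]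

end HTaux
namespace HTaux

variable {d : ℕ}

lemma star_mul_E (c x y : ℝ) :
    star ((c : ℂ) * E x) * ((c : ℂ) * E y) = (((c ^ 2 : ℝ)) : ℂ) * E (y - x) := by
  have hs : star (E x) = E (-x) := conj_E x
  rw [star_mul', hs, Complex.star_def, Complex.conj_ofReal]
  rw [sub_eq_add_neg, E_add]
  push_cast
  ring

lemma hMatrix_apply (S : Matrix (Fin d) (Fin d) ℤ) (A L : Finset (Fin d → ℤ))
    (ℓ : L) (a : A) :
    hMatrix S A L ℓ a = ((1 / Real.sqrt (A.card) : ℝ) : ℂ) *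
      E (ip ((mR S)⁻¹.mulVec (vR (a : Fin d → ℤ))) (vR (ℓ : Fin d → ℤ))) := rfl

lemma card_sq (n : ℕ) (hn : 0 < n) : ((1 / Real.sqrt n : ℝ)) ^ 2 = 1 / n := by
  rw [div_pow, one_pow, Real.sq_sqrt (by positivity)]

/-- Column orthogonality extracted from a Hadamard triple. -/
lemma ortho_col {S : Matrix (Fin d) (Fin d) ℤ} {A L : Finset (Fin d → ℤ)}
    (h : IsHadamardTriple S A L) {a a' : Fin d → ℤ} (ha : a ∈ A) (ha' : a' ∈ A)
    (hne : a ≠ a') :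
    ∑ ℓ ∈ L, E (ip ((mR S)⁻¹.mulVec (vR a')) (vR ℓ) -
      ip ((mR S)⁻¹.mulVec (vR a)) (vR ℓ)) = 0 := by
  have hA : 0 < A.card := Finset.card_pos.mpr ⟨a, ha⟩
  have key := congrFun (congrFun h.2 ⟨a, ha⟩) ⟨a', ha'⟩
  rw [Matrix.mul_apply, Matrix.one_apply_ne (fun hme => hne (by
    simpa [Subtype.ext_iff] using hme))] at key
  have hterm : ∀ ℓ : L, (hMatrix S A L)ᴴ ⟨a, ha⟩ ℓ * hMatrix S A L ℓ ⟨a', ha'⟩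
      = (((1 / Real.sqrt (A.card) : ℝ) ^ 2 : ℝ) : ℂ) *
        E (ip ((mR S)⁻¹.mulVec (vR a')) (vR (ℓ : Fin d → ℤ)) -
           ip ((mR S)⁻¹.mulVec (vR a)) (vR (ℓ : Fin d → ℤ))) := by
    intro ℓ
    rw [Matrix.conjTranspose_apply, hMatrix_apply, hMatrix_apply, star_mul_E]
  rw [Finset.sum_congr rfl (fun ℓ _ => hterm ℓ), ← Finset.mul_sum] at key
  have hc : (((1 / Real.sqrt (A.card) : ℝ) ^ 2 : ℝ) : ℂ) ≠ 0 := by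
    rw [card_sq _ hA]
    push_cast
    exact one_div_ne_zero (Nat.cast_ne_zero.mpr hA.ne')
  have := (mul_eq_zero.mp key).resolve_left hc
  rw [← Finset.sum_coe_sort L]
  exact this

/-- Row orthogonality extracted from a Hadamard triple. -/
lemma ortho_row {S : Matrix (Fin d) (Fin d) ℤ} {A L : Finset (Fin d → ℤ)}
    (h : IsHadamardTriple S A L) {ℓ ℓ' : Fin d → ℤ} (hl : ℓ ∈ L) (hl' : ℓ' ∈ L)
    (hne : ℓ ≠ ℓ') :
    ∑ a ∈ A, E (ip ((mR S)⁻¹.mulVec (vR a)) (vR ℓ) -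
      ip ((mR S)⁻¹.mulVec (vR a)) (vR ℓ')) = 0 := by
  have hL : 0 < L.card := Finset.card_pos.mpr ⟨ℓ, hl⟩
  have hA : 0 < A.card := h.1 ▸ hL
  have hcard : Fintype.card A = Fintype.card L := by
    simp [Fintype.card_coe, h.1]
  have e : (A : Type _) ≃ (L : Type _) := Fintype.equivOfCardEq hcard
  have hrow : hMatrix S A L * (hMatrix S A L)ᴴ = 1 := by
    exact (Matrix.mul_eq_one_comm_of_equiv e.symm).mpr h.2
  have key := congrFun (congrFun hrow ⟨ℓ, hl⟩) ⟨ℓ', hl'⟩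
  rw [Matrix.mul_apply, Matrix.one_apply_ne (fun hme => hne (by
    simpa [Subtype.ext_iff] using hme))] at key
  have hterm : ∀ a : A, hMatrix S A L ⟨ℓ, hl⟩ a * (hMatrix S A L)ᴴ a ⟨ℓ', hl'⟩
      = (((1 / Real.sqrt (A.card) : ℝ) ^ 2 : ℝ) : ℂ) *
        E (ip ((mR S)⁻¹.mulVec (vR (a : Fin d → ℤ))) (vR ℓ) -
           ip ((mR S)⁻¹.mulVec (vR (a : Fin d → ℤ))) (vR ℓ')) := by
    intro a
    rw [Matrix.conjTranspose_apply, hMatrix_apply, hMatrix_apply, mul_comm, star_mul_E]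
  rw [Finset.sum_congr rfl (fun a _ => hterm a), ← Finset.mul_sum] at key
  have hc : (((1 / Real.sqrt (A.card) : ℝ) ^ 2 : ℝ) : ℂ) ≠ 0 := by
    rw [card_sq _ hA]
    push_cast
    exact one_div_ne_zero (Nat.cast_ne_zero.mpr hA.ne')
  have := (mul_eq_zero.mp key).resolve_left hc
  rw [← Finset.sum_coe_sort A]
  exact this

end HTaux
namespace HTaux

variable {d : ℕ}

lemma ip_sub_right (x y z : Fin d → ℝ) : ip x (y - z) = ip x y - ip x z := by
  simp [ip, mul_sub, Finset.sum_sub_distrib]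

lemma vR_sub (x y : Fin d → ℤ) : vR (x - y) = vR x - vR y := by
  funext i; simp [vR]

lemma mulVec_finsum (M : Matrix (Fin d) (Fin d) ℤ) {k : ℕ}
    (v : Fin k → (Fin d → ℤ)) :
    M.mulVec (∑ j : Fin k, v j) = ∑ j : Fin k, M.mulVec (v j) := by
  rw [← Matrix.mulVecLin_apply, map_sum]
  simp [Matrix.mulVecLin_apply]

lemma sum_split (R : Matrix (Fin d) (Fin d) ℤ) (m k : ℕ)
    (b : Fin (m + k) → (Fin d → ℤ)) :
    ∑ j : Fin (m + k), (R ^ (j : ℕ)).mulVec (b j)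
      = (∑ j : Fin m, (R ^ (j : ℕ)).mulVec (b (Fin.castAdd k j)))
        + (R ^ m).mulVec (∑ j : Fin k, (R ^ (j : ℕ)).mulVec (b (Fin.natAdd m j))) := by
  rw [Fin.sum_univ_add]
  congr 1
  rw [mulVec_finsum]
  refine Finset.sum_congr rfl (fun j _ => ?_)
  rw [Matrix.mulVec_mulVec, ← pow_add, Fin.coe_natAdd]

lemma Bk_add (R : Matrix (Fin d) (Fin d) ℤ) (B : Finset (Fin d → ℤ)) (m k : ℕ) :
    Bk R B (m + k)
      = ((Bk R B m) ×ˢ (Bk R B k)).image (fun p => p.1 + (R ^ m).mulVec p.2) := by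
  ext x
  simp only [Bk, Finset.mem_image, Finset.mem_product, Fintype.mem_piFinset, Prod.exists]
  constructor
  · rintro ⟨b, hb, rfl⟩
    refine ⟨∑ j : Fin m, (R ^ (j : ℕ)).mulVec (b (Fin.castAdd k j)),
      ∑ j : Fin k, (R ^ (j : ℕ)).mulVec (b (Fin.natAdd m j)),
      ⟨⟨fun j => b (Fin.castAdd k j), fun j => hb _, rfl⟩,
       ⟨fun j => b (Fin.natAdd m j), fun j => hb _, rfl⟩⟩, (sum_split R m k b).symm⟩
  · rintro ⟨a1, a2, ⟨⟨b1, hb1, rfl⟩, ⟨b2, hb2, rfl⟩⟩, rfl⟩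
    refine ⟨Fin.append b1 b2, ?_, ?_⟩
    · intro j
      refine Fin.addCases (fun i => ?_) (fun i => ?_) j
      · rw [Fin.append_left]; exact hb1 i
      · rw [Fin.append_right]; exact hb2 i
    · rw [sum_split R m k]
      simp only [Fin.append_left, Fin.append_right]

end HTaux
namespace HTaux

variable {d : ℕ}

lemma pow_inv_mul (P : Matrix (Fin d) (Fin d) ℝ) (hdet : P.det ≠ 0) (n1 n2 : ℕ) :
    (P ^ (n1 + n2))⁻¹ * P ^ n2 = (P ^ n1)⁻¹ := by
  rw [add_comm, pow_add, Matrix.mul_inv_rev, mul_assoc,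
    Matrix.nonsing_inv_mul _ (isUnit_iff_ne_zero.mpr (by
      rw [Matrix.det_pow]; exact pow_ne_zero _ hdet)), mul_one]

lemma mul_pow_inv (P : Matrix (Fin d) (Fin d) ℝ) (hdet : P.det ≠ 0) (n1 n2 : ℕ) :
    P ^ n1 * (P ^ (n1 + n2))⁻¹ = (P ^ n2)⁻¹ := by
  rw [add_comm n1 n2, pow_add, Matrix.mul_inv_rev, ← mul_assoc,
    Matrix.mul_nonsing_inv _ (isUnit_iff_ne_zero.mpr (by
      rw [Matrix.det_pow]; exact pow_ne_zero _ hdet)), one_mul]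

/-- Decomposition of the key inner product. -/
lemma ip_split {R : Matrix (Fin d) (Fin d) ℤ} (hdet : (mR R).det ≠ 0) (n1 n2 : ℕ)
    (a1 a2 l1 l2 : Fin d → ℤ) :
    ip ((mR (R ^ (n1 + n2)))⁻¹.mulVec (vR (a2 + (R ^ n2).mulVec a1)))
       (vR (l1 + (Rᵀ ^ n1).mulVec l2))
    = ip ((mR (R ^ (n1 + n2)))⁻¹.mulVec (vR a2)) (vR l1)
      + ip ((mR (R ^ n2))⁻¹.mulVec (vR a2)) (vR l2)
      + ip ((mR (R ^ n1))⁻¹.mulVec (vR a1)) (vR l1)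
      + ip (vR a1) (vR l2) := by
  rw [vR_add, vR_add, vR_mulVec, vR_mulVec]
  simp only [mR_pow, mR_transpose, ← Matrix.transpose_pow]
  rw [Matrix.mulVec_add, ip_add_left, ip_add_right, ip_add_right]
  rw [Matrix.mulVec_mulVec, pow_inv_mul _ hdet, ip_transpose, ip_transpose,
    Matrix.mulVec_mulVec, Matrix.mulVec_mulVec, mul_pow_inv _ hdet,
    Matrix.mul_nonsing_inv _ (isUnit_iff_ne_zero.mpr (det_mR_pow_ne_zero hdet n1)),
    Matrix.one_mulVec]
  ring

lemma E_regroup (X Y Z W X' Y' Z' W' : ℝ) (h : E (W' - W) = 1) :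
    E (X' + Y' + Z' + W' - (X + Y + Z + W))
      = E ((X' - X) + (Z' - Z)) * E (Y' - Y) := by
  rw [show X' + Y' + Z' + W' - (X + Y + Z + W)
      = (((X' - X) + (Z' - Z)) + (Y' - Y)) + (W' - W) by ring, E_add, E_add, h, mul_one]

lemma E_diff_split {R : Matrix (Fin d) (Fin d) ℤ} (hdet : (mR R).det ≠ 0) (n1 n2 : ℕ)
    (a1 a2 a1' a2' l1 l2 : Fin d → ℤ) :
    E (ip ((mR (R ^ (n1 + n2)))⁻¹.mulVec (vR (a2' + (R ^ n2).mulVec a1')))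
          (vR (l1 + (Rᵀ ^ n1).mulVec l2))
       - ip ((mR (R ^ (n1 + n2)))⁻¹.mulVec (vR (a2 + (R ^ n2).mulVec a1)))
          (vR (l1 + (Rᵀ ^ n1).mulVec l2)))
    = E ((ip ((mR (R ^ (n1 + n2)))⁻¹.mulVec (vR a2')) (vR l1)
          - ip ((mR (R ^ (n1 + n2)))⁻¹.mulVec (vR a2)) (vR l1))
         + (ip ((mR (R ^ n1))⁻¹.mulVec (vR a1')) (vR l1)
            - ip ((mR (R ^ n1))⁻¹.mulVec (vR a1)) (vR l1)))
      * E (ip ((mR (R ^ n2))⁻¹.mulVec (vR a2')) (vR l2)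
           - ip ((mR (R ^ n2))⁻¹.mulVec (vR a2)) (vR l2)) := by
  rw [ip_split hdet n1 n2 a1' a2' l1 l2, ip_split hdet n1 n2 a1 a2 l1 l2]
  apply E_regroup
  rw [← ip_sub_left, ← vR_sub]
  exact E_ip_int _ _

/-- Simple-digit property extracted from a Hadamard triple. -/
lemma simple_of_hadamard {R : Matrix (Fin d) (Fin d) ℤ} (hdet : (mR R).det ≠ 0)
    {B : Finset (Fin d → ℤ)} {m : ℕ} {J : Finset (Fin d → ℤ)}
    (h : IsHadamardTriple (R ^ m) (Bk R B m) J) {a a' : Fin d → ℤ}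
    (ha : a ∈ Bk R B m) (ha' : a' ∈ Bk R B m)
    (hc : ∃ c : Fin d → ℤ, a' - a = (R ^ m).mulVec c) : a = a' := by
  by_contra hne
  obtain ⟨c, hc⟩ := hc
  have hsum := ortho_col h ha ha' hne
  have hterm : ∀ ℓ ∈ J, E (ip ((mR (R ^ m))⁻¹.mulVec (vR a')) (vR ℓ)
      - ip ((mR (R ^ m))⁻¹.mulVec (vR a)) (vR ℓ)) = 1 := by
    intro ℓ _
    rw [← ip_sub_left, ← Matrix.mulVec_sub, ← vR_sub, hc, vR_mulVec, mR_pow,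
      inv_mulVec_cancel hdet]
    exact E_ip_int _ _
  rw [Finset.sum_congr rfl hterm, Finset.sum_const, nsmul_eq_mul, mul_one] at hsum
  have hJ : 0 < J.card := h.1 ▸ Finset.card_pos.mpr ⟨a, ha⟩
  exact (Nat.cast_ne_zero.mpr hJ.ne').elim (by exact_mod_cast hsum)

/-- Injectivity of the digit decomposition map. -/
lemma digit_injOn {R : Matrix (Fin d) (Fin d) ℤ} (hdet : (mR R).det ≠ 0)
    {B : Finset (Fin d → ℤ)} {m : ℕ} {J : Finset (Fin d → ℤ)}
    (h : IsHadamardTriple (R ^ m) (Bk R B m) J) (k : ℕ) :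
    Set.InjOn (fun p : (Fin d → ℤ) × (Fin d → ℤ) => p.1 + (R ^ m).mulVec p.2)
      (((Bk R B m) ×ˢ (Bk R B k) : Finset _) : Set _) := by
  rintro ⟨a1, a2⟩ hp ⟨a1', a2'⟩ hp' heq
  simp only [Finset.coe_product, Set.mem_prod, Finset.mem_coe] at hp hp'
  simp only at heq
  have hd : a1' - a1 = (R ^ m).mulVec (a2 - a2') := by
    rw [Matrix.mulVec_sub, sub_eq_sub_iff_add_eq_add, ← heq]
    exact add_comm _ _
  have h11 : a1 = a1' := simple_of_hadamard hdet h hp.1 hp'.1 ⟨a2 - a2', hd⟩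
  subst h11
  have h22 : a2 = a2' := mulVec_int_inj hdet m (by
    have := heq
    exact add_left_cancel this)
  rw [h22]

/-- Injectivity of the frequency combination map. -/
lemma freq_injOn {R : Matrix (Fin d) (Fin d) ℤ} (hdet : (mR R).det ≠ 0)
    {B : Finset (Fin d → ℤ)} {n1 : ℕ} {J1 J2 : Finset (Fin d → ℤ)}
    (h1 : IsHadamardTriple (R ^ n1) (Bk R B n1) J1) :
    Set.InjOn (fun p : (Fin d → ℤ) × (Fin d → ℤ) => p.1 + (Rᵀ ^ n1).mulVec p.2)
      ((J1 ×ˢ J2 : Finset _) : Set _) := by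
  have hdetT : (mR Rᵀ).det ≠ 0 := by
    rw [mR_transpose, Matrix.det_transpose]; exact hdet
  rintro ⟨l1, l2⟩ hp ⟨l1', l2'⟩ hp' heq
  simp only [Finset.coe_product, Set.mem_prod, Finset.mem_coe] at hp hp'
  simp only at heq
  have hl1 : l1 = l1' := by
    by_contra hne
    have hsum := ortho_row h1 hp.1 hp'.1 hne
    have hd : l1 - l1' = (Rᵀ ^ n1).mulVec (l2' - l2) := by
      rw [Matrix.mulVec_sub, sub_eq_sub_iff_add_eq_add, heq]
      exact add_comm _ _
    have hterm : ∀ a ∈ Bk R B n1, E (ip ((mR (R ^ n1))⁻¹.mulVec (vR a)) (vR l1)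
        - ip ((mR (R ^ n1))⁻¹.mulVec (vR a)) (vR l1')) = 1 := by
      intro a _
      rw [← ip_sub_right, ← vR_sub, hd, vR_mulVec]
      rw [show mR (Rᵀ ^ n1) = ((mR R) ^ n1)ᵀ by
        rw [mR_pow, mR_transpose, Matrix.transpose_pow]]
      rw [ip_transpose, mR_pow, mulVec_inv_cancel hdet]
      exact E_ip_int _ _
    rw [Finset.sum_congr rfl hterm, Finset.sum_const, nsmul_eq_mul, mul_one] at hsum
    have hJ1 : 0 < J1.card := Finset.card_pos.mpr ⟨l1, hp.1⟩
    have hBpos : 0 < (Bk R B n1).card := h1.1 ▸ hJ1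
    exact (Nat.cast_ne_zero (R := ℂ)).mpr hBpos.ne' hsum
  subst hl1
  have h22 : l2 = l2' := mulVec_int_inj hdetT n1 (add_left_cancel heq)
  rw [h22]

end HTaux
namespace HTaux

variable {d : ℕ}

lemma entry_eq {S : Matrix (Fin d) (Fin d) ℤ} {A L : Finset (Fin d → ℤ)} (a a' : A) :
    ((hMatrix S A L)ᴴ * hMatrix S A L) a a'
    = ∑ ℓ ∈ L, (((1 / Real.sqrt (A.card) : ℝ) ^ 2 : ℝ) : ℂ) *
        E (ip ((mR S)⁻¹.mulVec (vR (a' : Fin d → ℤ))) (vR ℓ)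
           - ip ((mR S)⁻¹.mulVec (vR (a : Fin d → ℤ))) (vR ℓ)) := by
  rw [Matrix.mul_apply, ← Finset.sum_coe_sort L]
  exact Finset.sum_congr rfl (fun ℓ _ => by
    rw [Matrix.conjTranspose_apply, hMatrix_apply, hMatrix_apply, star_mul_E])

end HTaux


/-- concatenation of Hadamard triples. -/
theorem hadamard_triple_concat {d : ℕ} (R : Matrix (Fin d) (Fin d) ℤ)
    (hR : Expansive R) (B J1 J2 : Finset (Fin d → ℤ)) (n1 n2 : ℕ)
    (h1 : IsHadamardTriple (R ^ n1) (Bk R B n1) J1)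
    (h2 : IsHadamardTriple (R ^ n2) (Bk R B n2) J2) :
    IsHadamardTriple (R ^ (n1 + n2)) (Bk R B (n1 + n2))
      ((J1 ×ˢ J2).image (fun p => p.1 + (Rᵀ ^ n1).mulVec p.2)) := by
  
  classical
  have hdet : (mR R).det ≠ 0 := HTaux.det_mR_ne_zero hR
  have hAeq : Bk R B (n1 + n2)
      = ((Bk R B n2) ×ˢ (Bk R B n1)).image
          (fun p => p.1 + (R ^ n2).mulVec p.2) := by
    rw [add_comm n1 n2]; exact HTaux.Bk_add R B n2 n1
  have hfinj := HTaux.digit_injOn hdet (B := B) h2 n1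
  have hginj := HTaux.freq_injOn hdet (B := B) (J2 := J2) h1
  have hcardA : (Bk R B (n1 + n2)).card = J1.card * J2.card := by
    rw [hAeq, Finset.card_image_of_injOn hfinj, Finset.card_product, h2.1, h1.1,
      Nat.mul_comm]
  constructor
  · rw [hcardA, Finset.card_image_of_injOn hginj, Finset.card_product]
  · ext a a'
    have hmem : (a : Fin d → ℤ) ∈ ((Bk R B n2) ×ˢ (Bk R B n1)).image
        (fun p => p.1 + (R ^ n2).mulVec p.2) := by rw [← hAeq]; exact a.2
    have hmem' : (a' : Fin d → ℤ) ∈ ((Bk R B n2) ×ˢ (Bk R B n1)).image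
        (fun p => p.1 + (R ^ n2).mulVec p.2) := by rw [← hAeq]; exact a'.2
    obtain ⟨⟨a2, a1⟩, hpmem, hfa⟩ := Finset.mem_image.mp hmem
    obtain ⟨⟨b2, b1⟩, hpmem', hfa'⟩ := Finset.mem_image.mp hmem'
    simp only at hfa hfa'
    have ha2 : a2 ∈ Bk R B n2 := (Finset.mem_product.mp hpmem).1
    have ha1 : a1 ∈ Bk R B n1 := (Finset.mem_product.mp hpmem).2
    have hb2 : b2 ∈ Bk R B n2 := (Finset.mem_product.mp hpmem').1
    have hb1 : b1 ∈ Bk R B n1 := (Finset.mem_product.mp hpmem').2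
    have step : ((hMatrix (R ^ (n1 + n2)) (Bk R B (n1 + n2))
          ((J1 ×ˢ J2).image (fun p => p.1 + (Rᵀ ^ n1).mulVec p.2)))ᴴ *
        hMatrix (R ^ (n1 + n2)) (Bk R B (n1 + n2))
          ((J1 ×ˢ J2).image (fun p => p.1 + (Rᵀ ^ n1).mulVec p.2))) a a'
        = (((1 / Real.sqrt ((Bk R B (n1 + n2)).card) : ℝ) ^ 2 : ℝ) : ℂ) *
          ((∑ l1 ∈ J1, HTaux.E
              ((ip ((mR (R ^ (n1 + n2)))⁻¹.mulVec (vR b2)) (vR l1)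
                - ip ((mR (R ^ (n1 + n2)))⁻¹.mulVec (vR a2)) (vR l1))
               + (ip ((mR (R ^ n1))⁻¹.mulVec (vR b1)) (vR l1)
                  - ip ((mR (R ^ n1))⁻¹.mulVec (vR a1)) (vR l1)))) *
           (∑ l2 ∈ J2, HTaux.E
              (ip ((mR (R ^ n2))⁻¹.mulVec (vR b2)) (vR l2)
               - ip ((mR (R ^ n2))⁻¹.mulVec (vR a2)) (vR l2)))) := by
      rw [HTaux.entry_eq, ← Finset.mul_sum]
      congr 1
      rw [Finset.sum_mul_sum]
      rw [Finset.sum_image (fun p hp q hq hpq =>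
        hginj (Finset.mem_coe.mpr hp) (Finset.mem_coe.mpr hq) hpq)]
      rw [Finset.sum_product]
      refine Finset.sum_congr rfl (fun l1 _ => Finset.sum_congr rfl (fun l2 _ => ?_))
      rw [← hfa, ← hfa']
      exact HTaux.E_diff_split hdet n1 n2 a1 a2 b1 b2 l1 l2
    by_cases hcc : (a : Fin d → ℤ) = (a' : Fin d → ℤ)
    · have haa : a = a' := Subtype.ext hcc
      subst haa
      have hpq : ((a2, a1) : (Fin d → ℤ) × (Fin d → ℤ)) = (b2, b1) :=
        hfinj (Finset.mem_coe.mpr hpmem) (Finset.mem_coe.mpr hpmem')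
          (by simp only; rw [hfa, hfa'])
      have e2 : a2 = b2 := congrArg Prod.fst hpq
      have e1 : a1 = b1 := congrArg Prod.snd hpq
      subst e2; subst e1
      rw [step, Matrix.one_apply_eq]
      simp only [sub_self, add_zero, HTaux.E_zero, Finset.sum_const, nsmul_eq_mul,
        mul_one]
      have hApos : 0 < (Bk R B (n1 + n2)).card := Finset.card_pos.mpr ⟨a, a.2⟩
      rw [HTaux.card_sq _ hApos, hcardA]
      have hJ1pos : 0 < J1.card := h1.1 ▸ Finset.card_pos.mpr ⟨a1, ha1⟩
      have hJ2pos : 0 < J2.card := h2.1 ▸ Finset.card_pos.mpr ⟨a2, ha2⟩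
      push_cast
      rw [one_div, inv_mul_cancel₀]
      exact mul_ne_zero (Nat.cast_ne_zero.mpr hJ1pos.ne')
        (Nat.cast_ne_zero.mpr hJ2pos.ne')
    · have hne' : a ≠ a' := fun h => hcc (congrArg _ h)
      rw [step, Matrix.one_apply_ne hne']
      by_cases h22 : a2 = b2
      · subst h22
        have h11 : a1 ≠ b1 := by
          intro h
          exact hcc (by rw [← hfa, ← hfa', h])
        have hF : (∑ l1 ∈ J1, HTaux.E
            ((ip ((mR (R ^ (n1 + n2)))⁻¹.mulVec (vR a2)) (vR l1)
              - ip ((mR (R ^ (n1 + n2)))⁻¹.mulVec (vR a2)) (vR l1))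
             + (ip ((mR (R ^ n1))⁻¹.mulVec (vR b1)) (vR l1)
                - ip ((mR (R ^ n1))⁻¹.mulVec (vR a1)) (vR l1)))) = 0 := by
          simp only [sub_self, zero_add]
          exact HTaux.ortho_col h1 ha1 hb1 h11
        rw [hF, zero_mul, mul_zero]
      · have hG : (∑ l2 ∈ J2, HTaux.E
            (ip ((mR (R ^ n2))⁻¹.mulVec (vR b2)) (vR l2)
             - ip ((mR (R ^ n2))⁻¹.mulVec (vR a2)) (vR l2))) = 0 :=
          HTaux.ortho_col h2 ha2 hb2 h22
        rw [hG, mul_zero, mul_zero]
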